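/- Let K₁, K₂ be compact open subgroups of a topological group G, with M a subgroup, and suppose each pair (Kᵢ, ρᵢ) (i=1,2) is 'decomposed' with respect to subgroups U, M, Ū in the sense that Kᵢ = (Kᵢ ∩ U)·(Kᵢ ∩ M)·(Kᵢ ∩ Ū), ρᵢ restricted to Kᵢ ∩ U and Kᵢ ∩ Ū is trivial, and ρᵢ restricted to K_{M,i} := Kᵢ ∩ M is an irreducible representation ρ_{M,i}. Then Hom_{K₁ ∩ K₂}(ρ₁, ρ₂) = Hom_{K_{M,1} ∩ K_{M,2}}(ρ_{M,1}, ρ_{M,2}) as subspaces of linear maps between the representation spaces. -/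
import Mathlib


/-- If `(K₁, ρ₁)` and `(K₂, ρ₂)` are pairs decomposed with respect to `(U, M, Ū)`
(Iwahori factorization `Kᵢ = (Kᵢ∩U)(Kᵢ∩M)(Kᵢ∩Ū)`, `ρᵢ` trivial on `Kᵢ∩U` and `Kᵢ∩Ū`,
and `ρᵢ|_{Kᵢ∩M} = ρ_{M,i}` irreducible), then
`Hom_{K₁∩K₂}(ρ₁, ρ₂) = Hom_{K_{M,1}∩K_{M,2}}(ρ_{M,1}, ρ_{M,2})`
as subspaces of linear maps. -/
theorem stmt_4 {G : Type*} [Group G] {C : Type*} [Field C]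
    {V₁ V₂ : Type*} [AddCommGroup V₁] [Module C V₁] [AddCommGroup V₂] [Module C V₂]
    (U M Ubar : Subgroup G)
    (hinj : Function.Injective (fun p : U × M × Ubar => (p.1 : G) * p.2.1 * p.2.2))
    (K₁ K₂ : Subgroup G)
    (ρ₁ : G → Module.End C V₁) (ρ₂ : G → Module.End C V₂)
    (hmul₁ : ∀ g ∈ K₁, ∀ g' ∈ K₁, ρ₁ (g * g') = ρ₁ g ∘ₗ ρ₁ g')
    (hmul₂ : ∀ g ∈ K₂, ∀ g' ∈ K₂, ρ₂ (g * g') = ρ₂ g ∘ₗ ρ₂ g')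
    (hdec₁ : ∀ k ∈ K₁, ∃ u ∈ K₁ ⊓ U, ∃ m ∈ K₁ ⊓ M, ∃ ub ∈ K₁ ⊓ Ubar, k = u * m * ub)
    (hdec₂ : ∀ k ∈ K₂, ∃ u ∈ K₂ ⊓ U, ∃ m ∈ K₂ ⊓ M, ∃ ub ∈ K₂ ⊓ Ubar, k = u * m * ub)
    (htriv₁U : ∀ u ∈ K₁ ⊓ U, ρ₁ u = LinearMap.id)
    (htriv₁Ubar : ∀ u ∈ K₁ ⊓ Ubar, ρ₁ u = LinearMap.id)
    (htriv₂U : ∀ u ∈ K₂ ⊓ U, ρ₂ u = LinearMap.id)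
    (htriv₂Ubar : ∀ u ∈ K₂ ⊓ Ubar, ρ₂ u = LinearMap.id)
    (hirr₁ : ∀ W : Submodule C V₁, (∀ m ∈ K₁ ⊓ M, ∀ v ∈ W, ρ₁ m v ∈ W) → W = ⊥ ∨ W = ⊤)
    (hirr₂ : ∀ W : Submodule C V₂, (∀ m ∈ K₂ ⊓ M, ∀ v ∈ W, ρ₂ m v ∈ W) → W = ⊥ ∨ W = ⊤)
    (T : V₁ →ₗ[C] V₂) :
    (∀ h ∈ K₁ ⊓ K₂, T ∘ₗ ρ₁ h = ρ₂ h ∘ₗ T) ↔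
      (∀ h ∈ (K₁ ⊓ M) ⊓ (K₂ ⊓ M), T ∘ₗ ρ₁ h = ρ₂ h ∘ₗ T) := by
  constructor
  · intro H h hh
    exact H h ⟨hh.1.1, hh.2.1⟩
  · intro H h hh
    obtain ⟨hK₁, hK₂⟩ := hh
    obtain ⟨u₁, hu₁, m₁, hm₁, ub₁, hub₁, he₁⟩ := hdec₁ h hK₁
    obtain ⟨u₂, hu₂, m₂, hm₂, ub₂, hub₂, he₂⟩ := hdec₂ h hK₂
    have heq := hinj (a₁ := (⟨u₁, hu₁.2⟩, ⟨m₁, hm₁.2⟩, ⟨ub₁, hub₁.2⟩))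
      (a₂ := (⟨u₂, hu₂.2⟩, ⟨m₂, hm₂.2⟩, ⟨ub₂, hub₂.2⟩)) (by simp [← he₁, ← he₂])
    have hu : u₁ = u₂ := congrArg (fun p => (p.1 : G)) heq
    have hm : m₁ = m₂ := congrArg (fun p => (p.2.1 : G)) heq
    have hub : ub₁ = ub₂ := congrArg (fun p => (p.2.2 : G)) heq
    have hr₁ : ρ₁ h = ρ₁ m₁ := by
      rw [he₁, hmul₁ _ (K₁.mul_mem hu₁.1 hm₁.1) _ hub₁.1,
        hmul₁ _ hu₁.1 _ hm₁.1, htriv₁U _ hu₁, htriv₁Ubar _ hub₁]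
      ext v; simp
    have hr₂ : ρ₂ h = ρ₂ m₁ := by
      rw [he₂, hmul₂ _ (K₂.mul_mem hu₂.1 hm₂.1) _ hub₂.1,
        hmul₂ _ hu₂.1 _ hm₂.1, htriv₂U _ hu₂, htriv₂Ubar _ hub₂, hm]
      ext v; simp
    rw [hr₁, hr₂]
    exact H m₁ ⟨hm₁, hm ▸ hm₂⟩
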